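/- Let f : ℝⁿ → ℝ be a weighted homogeneous polynomial of type (d; w₁, …, wₙ) whose gradient vanishes only at the origin in some neighborhood of 0 (isolated singularity). Then there exist a constant C > 0 and a neighborhood U of the origin such that for all x ∈ U, (Σ_{i=1}^n ρ(x)^{2wᵢ} |∂f/∂xᵢ(x)|²)^{1/2} ≥ C · ρ(x)^d, where ρ(x) = (Σ_{i=1}^n |xᵢ|^{2/wᵢ})^{1/2}. -/
import Mathlib


open MvPolynomial

/-- Euclidean norm of the gradient of a polynomial `f` at `x`. -/
noncomputable def gradNorm {n : ℕ} (f : MvPolynomial (Fin n) ℝ) (x : Fin n → ℝ) : ℝ :=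
  Real.sqrt (∑ i, (eval x (pderiv i f)) ^ 2)

/-- Euclidean norm on `Fin n → ℝ`. -/
noncomputable def eNorm {n : ℕ} (x : Fin n → ℝ) : ℝ :=
  Real.sqrt (∑ i, (x i) ^ 2)

/-- `f` is weighted homogeneous of type `(d; w)`: every monomial `x^α` appearing in `f`
satisfies `∑ i, α i * w i = d`. -/
def IsWeightedHomog {n : ℕ} (f : MvPolynomial (Fin n) ℝ) (w : Fin n → ℕ) (d : ℕ) : Prop :=
  ∀ α ∈ f.support, ∑ i, α i * w i = d

/-- `f` is non-degenerate (isolated singularity at the origin): in some neighborhood of `0`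
the gradient of `f` vanishes only at the origin. -/
def Nondeg {n : ℕ} (f : MvPolynomial (Fin n) ℝ) : Prop :=
  ∃ U ∈ nhds (0 : Fin n → ℝ), ∀ x ∈ U, (∀ i, eval x (pderiv i f) = 0) → x = 0

/-- The Łojasiewicz inequality `‖∇f(x)‖ ≥ C ‖x‖^lam` holds near `0` for some `C > 0`. -/
def LojIneq {n : ℕ} (f : MvPolynomial (Fin n) ℝ) (lam : ℝ) : Prop :=
  ∃ C > (0 : ℝ), ∃ U ∈ nhds (0 : Fin n → ℝ), ∀ x ∈ U, C * eNorm x ^ lam ≤ gradNorm f x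

/-- The Łojasiewicz exponent of `f`: the infimum of all `lam > 0` for which the
Łojasiewicz inequality holds near the origin. -/
noncomputable def lojExp {n : ℕ} (f : MvPolynomial (Fin n) ℝ) : ℝ :=
  sInf {lam : ℝ | 0 < lam ∧ LojIneq f lam}

/-- The weighted "radius" `ρ(x) = (∑ i |x i| ^ (2 / w i)) ^ (1/2)`. -/
noncomputable def rho {n : ℕ} (w : Fin n → ℕ) (x : Fin n → ℝ) : ℝ :=
  Real.sqrt (∑ i, |x i| ^ ((2 : ℝ) / (w i : ℝ)))

/-- The weighted norm of the gradient:
`‖grad_w f(x)‖_w = (∑ i ρ(x)^(2 wᵢ) |∂f/∂xᵢ(x)|²)^(1/2)`. -/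
noncomputable def wGradNorm {n : ℕ} (w : Fin n → ℕ) (f : MvPolynomial (Fin n) ℝ)
    (x : Fin n → ℝ) : ℝ :=
  Real.sqrt (∑ i, rho w x ^ (2 * w i) * (eval x (pderiv i f)) ^ 2)


section AuxLemmas

open Finset

set_option maxHeartbeats 1000000

lemma eval_monomial_scale {n : ℕ} (w : Fin n → ℕ) (β : Fin n →₀ ℕ) (c t : ℝ) (x : Fin n → ℝ) :
    eval (fun j => t ^ w j * x j) (monomial β c)
      = t ^ (∑ j, β j * w j) * eval x (monomial β c) := by
  rw [eval_monomial, eval_monomial, Finsupp.prod_pow, Finsupp.prod_pow]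
  have : ∀ j : Fin n, (t ^ w j * x j) ^ β j = t ^ (β j * w j) * x j ^ β j := by
    intro j; rw [mul_pow, ← pow_mul, Nat.mul_comm]
  simp_rw [this, Finset.prod_mul_distrib, Finset.prod_pow_eq_pow_sum]
  ring

lemma pderiv_scale {n d : ℕ} (w : Fin n → ℕ) (f : MvPolynomial (Fin n) ℝ)
    (hhom : ∀ α ∈ f.support, ∑ i, α i * w i = d) (i : Fin n) (t : ℝ) (x : Fin n → ℝ) :
    t ^ w i * eval (fun j => t ^ w j * x j) (pderiv i f)
      = t ^ d * eval x (pderiv i f) := by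
  conv_lhs => rw [f.as_sum]
  conv_rhs => rw [f.as_sum]
  simp only [map_sum, Finset.mul_sum]
  refine Finset.sum_congr rfl fun α hα => ?_
  have hdeg := hhom α hα
  rw [pderiv_monomial, eval_monomial_scale]
  set β : Fin n →₀ ℕ := α - Finsupp.single i 1 with hβ
  rcases Nat.eq_zero_or_pos (α i) with h0 | hpos
  · simp [h0]
  · have hsum : w i + ∑ j, β j * w j = d := by
      rw [← hdeg]
      rw [← Finset.add_sum_erase _ _ (Finset.mem_univ i), ← Finset.add_sum_erase _ (fun j => α j * w j) (Finset.mem_univ i)]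
      have h1 : β i = α i - 1 := by
        rw [hβ]; simp [Finsupp.tsub_apply]
      have h2 : ∀ j ∈ Finset.univ.erase i, β j * w j = α j * w j := by
        intro j hj
        have : j ≠ i := Finset.ne_of_mem_erase hj
        rw [hβ]; simp [Finsupp.tsub_apply, Finsupp.single_apply, this, Ne.symm this]
      rw [Finset.sum_congr rfl h2, h1, ← add_assoc]
      congr 1
      obtain ⟨k, hk⟩ : ∃ k, α i = k + 1 := ⟨α i - 1, by omega⟩
      rw [hk]
      simp [Nat.add_mul, Nat.add_comm]
    rw [← mul_assoc, ← pow_add, hsum]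

lemma rho_scale {n : ℕ} (w : Fin n → ℕ) (hw : ∀ i, 0 < w i) (t : ℝ) (ht : 0 < t)
    (x : Fin n → ℝ) : rho w (fun j => t ^ w j * x j) = t * rho w x := by
  unfold rho
  have key : ∀ j : Fin n, |t ^ w j * x j| ^ ((2:ℝ)/(w j : ℝ))
      = t ^ (2:ℝ) * |x j| ^ ((2:ℝ)/(w j : ℝ)) := by
    intro j
    rw [abs_mul, abs_pow, abs_of_pos ht,
      Real.mul_rpow (by positivity) (abs_nonneg _)]
    congr 1
    rw [← Real.rpow_natCast t (w j), ← Real.rpow_mul ht.le]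
    congr 1
    have hwj : (w j : ℝ) ≠ 0 := Nat.cast_ne_zero.2 (hw j).ne'
    field_simp
  simp_rw [key, ← Finset.mul_sum]
  rw [Real.sqrt_mul (by positivity), Real.rpow_two, Real.sqrt_sq ht.le]

lemma rho_nonneg {n : ℕ} (w : Fin n → ℕ) (x : Fin n → ℝ) : 0 ≤ rho w x := Real.sqrt_nonneg _

lemma rho_pos {n : ℕ} (w : Fin n → ℕ) (hw : ∀ i, 0 < w i) (x : Fin n → ℝ) (hx : x ≠ 0) :
    0 < rho w x := by
  obtain ⟨i, hi⟩ : ∃ i, x i ≠ 0 := by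
    by_contra h; push_neg at h; exact hx (funext h)
  apply Real.sqrt_pos.2
  have h1 : (0:ℝ) < |x i| ^ ((2:ℝ)/(w i : ℝ)) := Real.rpow_pos_of_pos (abs_pos.2 hi) _
  have h2 : ∀ j ∈ Finset.univ, (0:ℝ) ≤ |x j| ^ ((2:ℝ)/(w j : ℝ)) := fun j _ =>
    Real.rpow_nonneg (abs_nonneg _) _
  exact Finset.sum_pos' h2 ⟨i, Finset.mem_univ i, h1⟩

lemma rho_zero {n : ℕ} (w : Fin n → ℕ) (hw : ∀ i, 0 < w i) : rho w (0 : Fin n → ℝ) = 0 := by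
  unfold rho
  rw [Finset.sum_eq_zero, Real.sqrt_zero]
  intro i _
  rw [Pi.zero_apply, abs_zero, Real.zero_rpow]
  have := hw i; positivity

lemma continuous_rho {n : ℕ} (w : Fin n → ℕ) : Continuous (rho w) := by
  unfold rho
  apply Real.continuous_sqrt.comp
  apply continuous_finset_sum
  intro i _
  apply Continuous.rpow_const (continuous_abs.comp (continuous_apply i))
  intro x
  right
  positivity

lemma continuous_wGradNorm {n : ℕ} (w : Fin n → ℕ) (f : MvPolynomial (Fin n) ℝ) :
    Continuous (wGradNorm w f) := by
  unfold wGradNorm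
  apply Real.continuous_sqrt.comp
  apply continuous_finset_sum
  intro i _
  exact ((continuous_rho w).pow _).mul ((f.pderiv i).continuous_eval.pow 2)

lemma wGradNorm_scale {n d : ℕ} (w : Fin n → ℕ) (hw : ∀ i, 0 < w i)
    (f : MvPolynomial (Fin n) ℝ)
    (hhom : ∀ α ∈ f.support, ∑ i, α i * w i = d) (t : ℝ) (ht : 0 < t) (x : Fin n → ℝ) :
    wGradNorm w f (fun j => t ^ w j * x j) = t ^ d * wGradNorm w f x := by
  unfold wGradNorm
  have key : ∀ i : Fin n,
      rho w (fun j => t ^ w j * x j) ^ (2 * w i)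
        * (eval (fun j => t ^ w j * x j) (pderiv i f)) ^ 2
      = t ^ (2 * d) * (rho w x ^ (2 * w i) * (eval x (pderiv i f)) ^ 2) := by
    intro i
    have h2 : (t ^ w i) ^ 2 * (eval (fun j => t ^ w j * x j) (pderiv i f)) ^ 2
        = (t ^ d) ^ 2 * (eval x (pderiv i f)) ^ 2 := by
      rw [← mul_pow, pderiv_scale w f hhom i t x, mul_pow]
    rw [rho_scale w hw t ht x]
    linear_combination (rho w x ^ (2 * w i)) * h2
  simp_rw [key, ← Finset.mul_sum]
  rw [Real.sqrt_mul (by positivity), mul_comm 2 d, pow_mul, Real.sqrt_sq (by positivity)]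

end AuxLemmas

set_option maxHeartbeats 1000000 in
theorem stmt3 (n d : ℕ) (w : Fin n → ℕ) (hd : 0 < d) (hw : ∀ i, 0 < w i)
    (f : MvPolynomial (Fin n) ℝ)
    (hhom : IsWeightedHomog f w d)
    (hnd : Nondeg f) :
    ∃ C > (0 : ℝ), ∃ U ∈ nhds (0 : Fin n → ℝ), ∀ x ∈ U,
      C * rho w x ^ d ≤ wGradNorm w f x := by
  classical
  set S : Set (Fin n → ℝ) := {y | rho w y = 1} with hS
  -- normalization: every nonzero x is a scaling of a point of S
  have hnormal : ∀ x : Fin n → ℝ, x ≠ 0 →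
      ∃ y ∈ S, x = fun j => (rho w x) ^ w j * y j := by
    intro x hx
    have ht : 0 < rho w x := rho_pos w hw x hx
    refine ⟨fun j => ((rho w x)⁻¹) ^ w j * x j, ?_, ?_⟩
    · show rho w _ = 1
      rw [rho_scale w hw _ (by positivity) x]
      field_simp
    · funext j
      simp only
      rw [← mul_assoc, ← mul_pow, mul_inv_cancel₀ ht.ne', one_pow, one_mul]
  -- S is compact
  have hS_closed : IsClosed S := isClosed_eq (continuous_rho w) continuous_const
  have hS_sub : S ⊆ Metric.closedBall 0 1 := by
    intro y hy
    have hsum : ∑ i, |y i| ^ ((2:ℝ)/(w i : ℝ)) = 1 := by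
      have : Real.sqrt (∑ i, |y i| ^ ((2:ℝ)/(w i : ℝ))) = 1 := hy
      nlinarith [Real.sq_sqrt (show (0:ℝ) ≤ ∑ i, |y i| ^ ((2:ℝ)/(w i : ℝ)) by positivity)]
    rw [Metric.mem_closedBall, dist_zero_right]
    rw [pi_norm_le_iff_of_nonneg (by norm_num)]
    intro i
    rw [Real.norm_eq_abs]
    by_contra hgt
    push_neg at hgt
    have h1 : (1:ℝ) < |y i| ^ ((2:ℝ)/(w i : ℝ)) := by
      exact (Real.one_lt_rpow_iff_of_pos (by linarith)).2 (Or.inl ⟨hgt, by have := hw i; positivity⟩)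
    have h2 : |y i| ^ ((2:ℝ)/(w i : ℝ)) ≤ 1 := by
      rw [← hsum]
      exact Finset.single_le_sum (f := fun j => |y j| ^ ((2:ℝ)/(w j : ℝ)))
        (fun j _ => Real.rpow_nonneg (abs_nonneg _) _) (Finset.mem_univ i)
    linarith
  have hS_cpt : IsCompact S :=
    (isCompact_closedBall 0 1).of_isClosed_subset hS_closed hS_sub
  by_cases hne : S.Nonempty
  · obtain ⟨y₀, hy₀S, hy₀min⟩ :=
      hS_cpt.exists_isMinOn hne (continuous_wGradNorm w f).continuousOn
    refine ⟨wGradNorm w f y₀, ?_, Set.univ, Filter.univ_mem, ?_⟩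
    · -- positivity of the minimum
      have hCnn : 0 ≤ wGradNorm w f y₀ := Real.sqrt_nonneg _
      rcases hCnn.lt_or_eq with h | h
      · exact h
      exfalso
      -- all partials vanish at y₀
      have hgrad : ∀ i, eval y₀ (pderiv i f) = 0 := by
        intro i
        have h0 : ∑ i, rho w y₀ ^ (2 * w i) * (eval y₀ (pderiv i f)) ^ 2 = 0 := by
          have h0' : wGradNorm w f y₀ = 0 := h.symm
          unfold wGradNorm at h0'
          exact (Real.sqrt_eq_zero (Finset.sum_nonneg fun i _ =>
            mul_nonneg (pow_nonneg (rho_nonneg w y₀) _) (sq_nonneg _))).1 h0'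
        have hterm := (Finset.sum_eq_zero_iff_of_nonneg (fun i _ =>
          mul_nonneg (pow_nonneg (rho_nonneg w y₀) _) (sq_nonneg _))).1 h0 i (Finset.mem_univ i)
        have hr1 : rho w y₀ = 1 := hy₀S
        rw [hr1, one_pow, one_mul] at hterm
        exact (pow_eq_zero_iff two_ne_zero).mp hterm
      have hy₀ne : y₀ ≠ 0 := by
        intro h0
        have : rho w y₀ = 1 := hy₀S
        rw [h0, rho_zero w hw] at this
        norm_num at this
      obtain ⟨U, hU, hU'⟩ := hnd
      -- the scaling curve tends to 0
      have hcont : Continuous (fun t : ℝ => fun j => t ^ w j * y₀ j) := by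
        apply continuous_pi
        intro j
        exact (continuous_pow (w j)).mul continuous_const
      have h00 : (fun j => (0:ℝ) ^ w j * y₀ j) = (0 : Fin n → ℝ) := by
        funext j
        rw [zero_pow (hw j).ne', zero_mul]; rfl
      have htend : Filter.Tendsto (fun t : ℝ => fun j => t ^ w j * y₀ j) (nhds 0) (nhds 0) := by
        have := hcont.tendsto 0
        rwa [h00] at this
      have hpre : (fun t : ℝ => fun j => t ^ w j * y₀ j) ⁻¹' U ∈ nhds (0:ℝ) := htend hU
      obtain ⟨ε, hε, hball⟩ := Metric.mem_nhds_iff.1 hpre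
      set t : ℝ := ε / 2 with htdef
      have htpos : 0 < t := by positivity
      have htmem : (fun j => t ^ w j * y₀ j) ∈ U := by
        apply hball
        rw [Metric.mem_ball, dist_zero_right, Real.norm_eq_abs, abs_of_pos htpos]
        linarith
      have hgrad' : ∀ i, eval (fun j => t ^ w j * y₀ j) (pderiv i f) = 0 := by
        intro i
        have := pderiv_scale w f hhom i t y₀
        rw [hgrad i, mul_zero] at this
        have htw : t ^ w i ≠ 0 := by positivity
        exact (mul_eq_zero.1 this).resolve_left htw
      have hzero := hU' _ htmem hgrad'
      apply hy₀ne
      funext j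
      have hj : t ^ w j * y₀ j = 0 := congrFun hzero j
      have htw : t ^ w j ≠ 0 := by positivity
      have hyj : y₀ j = 0 := by
        rcases mul_eq_zero.1 hj with h' | h'
        · exact absurd h' htw
        · exact h'
      exact hyj
    · intro x _
      by_cases hx : x = 0
      · rw [hx, rho_zero w hw, zero_pow hd.ne', mul_zero]
        exact Real.sqrt_nonneg _
      · obtain ⟨y, hyS, hxy⟩ := hnormal x hx
        have ht : 0 < rho w x := rho_pos w hw x hx
        have hscale : wGradNorm w f x = rho w x ^ d * wGradNorm w f y := by
          conv_lhs => rw [hxy]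
          exact wGradNorm_scale w hw f hhom _ ht y
        rw [hscale, mul_comm]
        apply mul_le_mul_of_nonneg_left (hy₀min hyS) (by positivity)
  · -- S empty: every point is 0
    refine ⟨1, one_pos, Set.univ, Filter.univ_mem, ?_⟩
    intro x _
    have hx : x = 0 := by
      by_contra hx
      obtain ⟨y, hyS, _⟩ := hnormal x hx
      exact hne ⟨y, hyS⟩
    rw [hx, rho_zero w hw, zero_pow hd.ne', mul_zero]
    exact Real.sqrt_nonneg _
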